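/- Kerov polynomial for k = 4: let A be a commutative ℚ-algebra, R_2, R_3, … ∈ A, L(ζ) = ζ + Σ_{j≥2} R_j ζ^{1-j}, H the compositional inverse of L, and Σ_k := -(1/k) [z^{-1}] H(z) H(z-1) ⋯ H(z-k+1). Then Σ_4 = R_5 + 5 R_3. -/

import Mathlib

noncomputable section

variable {A : Type*}

/-- The formal derivative `d/dz` of a formal series at infinity. A series at infinity
`f(z) = Σ_{n ≤ N} a_n z^n` is modeled as a `LaurentSeries` in the variable `w = 1/z`,
so that the coefficient of `z^n` is `f.coeff (-n)`; the derivative satisfies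
`(derivZ f).coeff m = (1 - m) • f.coeff (m - 1)`. -/
noncomputable def derivZ [CommRing A] (f : LaurentSeries A) : LaurentSeries A where
  coeff m := (1 - m) • f.coeff (m - 1)
  isPWO_support' := by
    refine (f.isPWO_support.image_of_monotone (f := fun n => n + 1)
      (fun a b hab => by simpa using hab)).mono ?_
    intro m hm
    have hf : f.coeff (m - 1) ≠ 0 := by
      intro h
      simp [Function.mem_support, h] at hm
    exact ⟨m - 1, by simpa [HahnSeries.mem_support] using hf, by ring⟩

/-- `IsSumOf g F` asserts that the formal series at infinity `g` is the coefficientwise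
convergent sum `Σ_{r ≥ 0} F r`: for each coefficient, the partial sums eventually stabilize. -/
def IsSumOf [CommRing A] (g : LaurentSeries A) (F : ℕ → LaurentSeries A) : Prop :=
  ∀ m : ℤ, ∃ N : ℕ, ∀ n : ℕ, N ≤ n → g.coeff m = (∑ r ∈ Finset.range n, F r).coeff m

namespace KerovAux
variable [CommRing A]

/-- all coefficients below `c` vanish -/
def SuppGe (c : ℤ) (f : LaurentSeries A) : Prop := ∀ m : ℤ, m < c → f.coeff m = 0

theorem SuppGe.mono {c d : ℤ} (h : c ≤ d) {f : LaurentSeries A} (hf : SuppGe d f) :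
    SuppGe c f := fun m hm => hf m (lt_of_lt_of_le hm h)

theorem SuppGe.mul {c d : ℤ} {f g : LaurentSeries A} (hf : SuppGe c f) (hg : SuppGe d g) :
    SuppGe (c + d) (f * g) := by
  intro m hm
  by_contra hne
  have hmem : m ∈ (f * g).support := hne
  obtain ⟨i, hi, j, hj, rfl⟩ := Set.mem_add.mp (HahnSeries.support_mul_subset hmem)
  have hic : c ≤ i := le_of_not_gt fun h => hi (hf i h)
  have hjd : d ≤ j := le_of_not_gt fun h => hj (hg j h)
  omega

theorem SuppGe.smul {c : ℤ} {q : ℚ} [Algebra ℚ A] {f : LaurentSeries A} (hf : SuppGe c f) :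
    SuppGe c (q • f) := by
  intro m hm
  rw [HahnSeries.coeff_smul, hf m hm, smul_zero]

theorem suppGe_pow {f : LaurentSeries A} (hf : SuppGe 1 f) (s : ℕ) : SuppGe s (f ^ s) := by
  induction s with
  | zero => intro m hm; exact HahnSeries.coeff_single_of_ne (by omega)
  | succ s ih =>
      have := ih.mul hf
      rw [← pow_succ] at this
      exact this.mono (by omega) |>.mono le_rfl

theorem sum_coeff {ι : Type*} (s : Finset ι) (F : ι → LaurentSeries A) (m : ℤ) :
    (∑ i ∈ s, F i).coeff m = ∑ i ∈ s, (F i).coeff m := by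
  induction s using Finset.cons_induction with
  | empty => simp
  | cons a s ha ih => rw [Finset.sum_cons, Finset.sum_cons, HahnSeries.coeff_add, ih]

theorem isSumOf_coeff {g : LaurentSeries A} {F : ℕ → LaurentSeries A} (h : IsSumOf g F)
    (m : ℤ) (n : ℕ) (hv : ∀ r : ℕ, n ≤ r → (F r).coeff m = 0) :
    g.coeff m = ∑ r ∈ Finset.range n, (F r).coeff m := by
  obtain ⟨N, hN⟩ := h m
  rw [hN (max N n) (le_max_left _ _), sum_coeff]
  rw [← Finset.sum_range_add_sum_Ico _ (le_max_right N n)]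
  rw [Finset.sum_eq_zero (fun r hr => hv r (Finset.mem_Ico.mp hr).1), add_zero]

theorem single_mul_coeff (c : ℤ) (x : A) (g : LaurentSeries A) (m : ℤ) :
    (HahnSeries.single c x * g).coeff m = x * g.coeff (m - c) := by
  have := HahnSeries.coeff_single_mul_add (r := x) (x := g) (a := m - c) (b := c)
  rwa [sub_add_cancel] at this

/-- key convolution lemma -/
theorem mul_coeff_eq {f g : LaurentSeries A} {a b : ℤ} (hf : SuppGe a f) (hg : SuppGe b g)
    (m : ℤ) (n : ℕ) (hn : m - b - a < n) :
    (f * g).coeff m = ∑ k ∈ Finset.range n, f.coeff (a + k) * g.coeff (m - a - k) := by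
  set Q : LaurentSeries A := ∑ k ∈ Finset.range n, HahnSeries.single (a + k) (f.coeff (a + k))
    with hQ
  have hQcoeff : ∀ i : ℤ, Q.coeff i =
      if h : ∃ k ∈ Finset.range n, i = a + k then f.coeff i else 0 := by
    intro i
    rw [hQ, sum_coeff]
    by_cases h : ∃ k ∈ Finset.range n, i = a + (k : ℤ)
    · obtain ⟨k0, hk0, rfl⟩ := h
      rw [dif_pos ⟨k0, hk0, rfl⟩]
      rw [Finset.sum_eq_single k0]
      · exact HahnSeries.coeff_single_same _ _
      · intro k hk hkne
        exact HahnSeries.coeff_single_of_ne (by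
          intro hc
          exact hkne (by omega))
      · intro hk; exact absurd hk0 hk
    · rw [dif_neg h]
      refine Finset.sum_eq_zero fun k hk => HahnSeries.coeff_single_of_ne ?_
      intro hc; exact h ⟨k, hk, hc⟩
  have hT : SuppGe (m - b + 1) (f - Q) := by
    intro i hi
    rw [HahnSeries.coeff_sub, hQcoeff i]
    by_cases h : ∃ k ∈ Finset.range n, i = a + (k : ℤ)
    · rw [dif_pos h, sub_self]
    · rw [dif_neg h, sub_zero]
      refine hf i ?_
      by_contra hia
      push_neg at hia
      have : i - a < n := by omega
      exact h ⟨(i - a).toNat, Finset.mem_range.mpr (by omega), by omega⟩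
  have hzero : ((f - Q) * g).coeff m = 0 := (hT.mul hg) m (by omega)
  have : (f * g).coeff m = (Q * g).coeff m := by
    have : f * g = (f - Q) * g + Q * g := by ring
    rw [this, HahnSeries.coeff_add, hzero, zero_add]
  rw [this, hQ, Finset.sum_mul, sum_coeff]
  refine Finset.sum_congr rfl fun k _ => ?_
  rw [single_mul_coeff]
  ring_nf

theorem derivZ_coeff (f : LaurentSeries A) (m : ℤ) :
    (derivZ f).coeff m = (1 - m) • f.coeff (m - 1) := rfl

theorem derivZ_iter_coeff (f : LaurentSeries A) (r : ℕ) (m : ℤ) :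
    (derivZ^[r] f).coeff m =
      (∏ k ∈ Finset.range r, (1 - m + (k : ℤ))) • f.coeff (m - r) := by
  induction r generalizing m with
  | zero => simp
  | succ r ih =>
      rw [Function.iterate_succ_apply', derivZ_coeff, ih, smul_smul]
      rw [Finset.prod_range_succ' (fun k => 1 - m + (k : ℤ))]
      congr 1
      · rw [mul_comm]
        congr 1
        · exact Finset.prod_congr rfl fun k _ => by push_cast; ring
        · push_cast; ring
      · congr 1
        push_cast
        ring

end KerovAux

open KerovAux

/-- Kerov polynomial for `k = 4`: over a commutative `ℚ`-algebra `A`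
with `R_2, R_3, … ∈ A`, `L(ζ) = ζ + Σ_{j≥2} R_j ζ^{1-j}`, `H` the compositional
inverse of `L` (so `H(L(ζ)) = ζ`), and
`Σ_k = -(1/k)[z^{-1}] H(z) H(z-1) ⋯ H(z-k+1)` where
`H(z-j) = Σ_{r≥0} ((-j)^r/r!) H^{(r)}(z)`, one has `Σ_4 = R_5 + 5 R_3` (in informal
notation). -/
theorem kerov_polynomial_four [CommRing A] [Algebra ℚ A]
    (B R : ℕ → A) (H L : LaurentSeries A) (Hshift : ℕ → LaurentSeries A)
    (hH : ∀ m : ℤ, H.coeff m =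
      if m = -1 then 1 else if 1 ≤ m then -B (m + 1).toNat else 0)
    (hL : ∀ m : ℤ, L.coeff m =
      if m = -1 then 1 else if 1 ≤ m then R (m + 1).toNat else 0)
    (hcomp : IsSumOf (HahnSeries.single (-1) 1)
      (fun s => ((Nat.factorial s : ℚ))⁻¹ •
        ((L - HahnSeries.single (-1) 1) ^ s * derivZ^[s] H)))
    (hHshift : ∀ j : ℕ, IsSumOf (Hshift j)
      (fun r => ((-(j : ℚ)) ^ r / (Nat.factorial r : ℚ)) • derivZ^[r] H)) :
    -((4 : ℚ))⁻¹ • (∏ j ∈ Finset.range 4, Hshift j).coeff 1 = R 5 + 5 * R 3 := by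
  have hHm1 : H.coeff (-1) = 1 := by rw [hH]; norm_num
  have hH0 : H.coeff 0 = 0 := by rw [hH]; norm_num
  have hHneg : ∀ m : ℤ, m ≤ -2 → H.coeff m = 0 := by
    intro m hm
    rw [hH, if_neg (by omega), if_neg (by omega)]
  have hGr : ∀ r : ℕ, SuppGe ((r : ℤ) - 1) (derivZ^[r] H) := by
    intro r m hm
    rw [derivZ_iter_coeff, hHneg (m - r) (by omega), smul_zero]
  have hSge : ∀ j : ℕ, SuppGe (-1) (Hshift j) := by
    intro j m hm
    rw [isSumOf_coeff (hHshift j) m 0 ?_, Finset.sum_range_zero]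
    intro r _
    rw [HahnSeries.coeff_smul, derivZ_iter_coeff, hHneg (m - r) (by omega),
      smul_zero, smul_zero]
  have hSc : ∀ (j : ℕ) (m : ℤ), -1 ≤ m → ∀ n : ℕ, m + 2 ≤ n →
      (Hshift j).coeff m = ∑ r ∈ Finset.range n,
        ((-(j : ℚ)) ^ r / (Nat.factorial r : ℚ)) •
          ((∏ k ∈ Finset.range r, (1 - m + (k : ℤ))) • H.coeff (m - r)) := by
    intro j m hm n hn
    rw [isSumOf_coeff (hHshift j) m n (fun r hr => by
      rw [HahnSeries.coeff_smul, derivZ_iter_coeff, hHneg (m - r) (by omega),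
        smul_zero, smul_zero])]
    exact Finset.sum_congr rfl fun r _ => by
      rw [HahnSeries.coeff_smul, derivZ_iter_coeff]
  -- the series E = L - ζ
  have hEge : SuppGe 1 (L - HahnSeries.single (-1) 1) := by
    intro m hm
    rw [HahnSeries.coeff_sub, hL, HahnSeries.coeff_single]
    rcases eq_or_ne m (-1) with h | h
    · simp [h]
    · rw [if_neg h, if_neg (by omega), if_neg h, sub_zero]
  have hEc : ∀ m : ℤ, 1 ≤ m →
      (L - HahnSeries.single (-1) 1).coeff m = R (m + 1).toNat := by
    intro m hm
    rw [HahnSeries.coeff_sub, hL, HahnSeries.coeff_single,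
      if_neg (by omega), if_pos hm, if_neg (by omega), sub_zero]
  have hE1 : (L - HahnSeries.single (-1) 1).coeff 1 = R 2 := by rw [hEc 1 le_rfl]; rfl
  have hE2 : (L - HahnSeries.single (-1) 1).coeff 2 = R 3 := by rw [hEc 2 (by norm_num)]; rfl
  have hE3 : (L - HahnSeries.single (-1) 1).coeff 3 = R 4 := by rw [hEc 3 (by norm_num)]; rfl
  have hE4 : (L - HahnSeries.single (-1) 1).coeff 4 = R 5 := by rw [hEc 4 (by norm_num)]; rfl
  have hG1 : SuppGe (0 : ℤ) (derivZ^[1] H) := SuppGe.mono (by norm_num) (hGr 1)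
  have hG2 : SuppGe (1 : ℤ) (derivZ^[2] H) := SuppGe.mono (by norm_num) (hGr 2)
  have hE2ge : SuppGe (2 : ℤ) ((L - HahnSeries.single (-1) 1) ^ 2) :=
    SuppGe.mono (by norm_num) (suppGe_pow hEge 2)
  have hd1 : ∀ t : ℤ, (derivZ H).coeff t = (1 - t) • H.coeff (t - 1) := fun t =>
    derivZ_coeff H t
  have hd2 : ∀ t : ℤ, (derivZ (derivZ H)).coeff t = ((1 - t) * (2 - t)) • H.coeff (t - 2) := by
    intro t
    rw [derivZ_coeff, derivZ_coeff, smul_smul]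
    congr 1
    · ring
    · congr 1; ring
  have hd2i : ∀ t : ℤ, (derivZ^[2] H).coeff t = ((1 - t) * (2 - t)) • H.coeff (t - 2) := by
    intro t
    rw [show derivZ^[2] H = derivZ (derivZ H) by
      rw [Function.iterate_succ_apply', Function.iterate_one]]
    exact hd2 t
  have hcomp' : ∀ m : ℤ, 1 ≤ m → ∀ n : ℕ, m + 1 < 2 * n →
      (0 : A) = ∑ s ∈ Finset.range n, ((Nat.factorial s : ℚ))⁻¹ •
        (((L - HahnSeries.single (-1) 1) ^ s * derivZ^[s] H).coeff m) := by
    intro m hm n hn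
    have h0 : (HahnSeries.single (-1 : ℤ) (1 : A)).coeff m =
        ∑ s ∈ Finset.range n, ((Nat.factorial s : ℚ))⁻¹ •
          ((L - HahnSeries.single (-1) 1) ^ s * derivZ^[s] H).coeff m := by
      rw [isSumOf_coeff hcomp m n (fun s hs => by
        rw [HahnSeries.coeff_smul,
          ((suppGe_pow hEge s).mul (hGr s)) m (by omega), smul_zero])]
      exact Finset.sum_congr rfl fun s _ => by rw [HahnSeries.coeff_smul]
    rw [← h0, HahnSeries.coeff_single_of_ne (by omega)]
  have hq1 : H.coeff 1 = -R 2 := by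
    have h := hcomp' 1 le_rfl 2 (by norm_num)
    simp only [Finset.sum_range_succ, Finset.sum_range_zero, pow_zero, pow_one,
      Function.iterate_zero, id_eq, one_mul] at h
    rw [mul_coeff_eq hEge hG1 1 1 (by norm_num)] at h
    simp only [Finset.sum_range_succ, Finset.sum_range_zero] at h
    norm_num [hd1, hE1, hHm1, hH0, Nat.factorial] at h
    linear_combination -h
  have hq2 : H.coeff 2 = -R 3 := by
    have h := hcomp' 2 (by norm_num) 2 (by norm_num)
    simp only [Finset.sum_range_succ, Finset.sum_range_zero, pow_zero, pow_one,
      Function.iterate_zero, id_eq, one_mul] at h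
    rw [mul_coeff_eq hEge hG1 2 2 (by norm_num)] at h
    simp only [Finset.sum_range_succ, Finset.sum_range_zero] at h
    norm_num [hd1, hE1, hE2, hHm1, hH0, Nat.factorial] at h
    linear_combination -h
  have hq4 : H.coeff 4 = -R 5 - 3 * (R 2 * R 3) := by
    have h := hcomp' 4 (by norm_num) 3 (by norm_num)
    simp only [Finset.sum_range_succ, Finset.sum_range_zero, pow_zero, pow_one,
      Function.iterate_zero, id_eq, one_mul] at h
    rw [mul_coeff_eq hEge hG1 4 4 (by norm_num),
      mul_coeff_eq hE2ge hG2 4 2 (by norm_num)] at h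
    simp only [Finset.sum_range_succ, Finset.sum_range_zero] at h
    norm_num [hd1, hd2, hd2i, hE1, hE2, hE3, hE4, hHm1, hH0, Nat.factorial,
      ← Int.cast_smul_eq_zsmul ℚ, smul_smul] at h
    rw [hq1, hq2] at h
    norm_num [Algebra.smul_def, map_ofNat] at h
    linear_combination -h
  have e0_m1 : (Hshift 0).coeff (-1 : ℤ) = (1 : A) := by
    rw [hSc 0 (-1 : ℤ) (by norm_num) 1 (by norm_num)]
    simp only [Finset.sum_range_succ, Finset.sum_range_zero, Finset.prod_range_succ,
      Finset.prod_range_zero]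
    norm_num [hHm1, hH0, ← Int.cast_smul_eq_zsmul ℚ, smul_smul, Nat.factorial]
  have e0_0 : (Hshift 0).coeff 0 = (0 : A) := by
    rw [hSc 0 0 (by norm_num) 2 (by norm_num)]
    simp only [Finset.sum_range_succ, Finset.sum_range_zero, Finset.prod_range_succ,
      Finset.prod_range_zero]
    norm_num [hHm1, hH0, ← Int.cast_smul_eq_zsmul ℚ, smul_smul, Nat.factorial]
  have e0_1 : (Hshift 0).coeff 1 = H.coeff 1 := by
    rw [hSc 0 1 (by norm_num) 3 (by norm_num)]
    simp only [Finset.sum_range_succ, Finset.sum_range_zero, Finset.prod_range_succ,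
      Finset.prod_range_zero]
    norm_num [hHm1, hH0, ← Int.cast_smul_eq_zsmul ℚ, smul_smul, Nat.factorial]
  have e0_2 : (Hshift 0).coeff 2 = H.coeff 2 := by
    rw [hSc 0 2 (by norm_num) 4 (by norm_num)]
    simp only [Finset.sum_range_succ, Finset.sum_range_zero, Finset.prod_range_succ,
      Finset.prod_range_zero]
    norm_num [hHm1, hH0, ← Int.cast_smul_eq_zsmul ℚ, smul_smul, Nat.factorial]
    try norm_num [Algebra.smul_def, map_ofNat]
    try ring
  have e0_3 : (Hshift 0).coeff 3 = H.coeff 3 := by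
    rw [hSc 0 3 (by norm_num) 5 (by norm_num)]
    simp only [Finset.sum_range_succ, Finset.sum_range_zero, Finset.prod_range_succ,
      Finset.prod_range_zero]
    norm_num [hHm1, hH0, ← Int.cast_smul_eq_zsmul ℚ, smul_smul, Nat.factorial]
    try norm_num [Algebra.smul_def, map_ofNat]
    try ring
  have e0_4 : (Hshift 0).coeff 4 = H.coeff 4 := by
    rw [hSc 0 4 (by norm_num) 6 (by norm_num)]
    simp only [Finset.sum_range_succ, Finset.sum_range_zero, Finset.prod_range_succ,
      Finset.prod_range_zero]
    norm_num [hHm1, hH0, ← Int.cast_smul_eq_zsmul ℚ, smul_smul, Nat.factorial]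
    try norm_num [Algebra.smul_def, map_ofNat]
    try ring
  have e1_m1 : (Hshift 1).coeff (-1 : ℤ) = (1 : A) := by
    rw [hSc 1 (-1 : ℤ) (by norm_num) 1 (by norm_num)]
    simp only [Finset.sum_range_succ, Finset.sum_range_zero, Finset.prod_range_succ,
      Finset.prod_range_zero]
    norm_num [hHm1, hH0, ← Int.cast_smul_eq_zsmul ℚ, smul_smul, Nat.factorial]
    try norm_num [Algebra.smul_def, map_ofNat]
    try ring
  have e1_0 : (Hshift 1).coeff 0 = (-1 : A) := by
    rw [hSc 1 0 (by norm_num) 2 (by norm_num)]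
    simp only [Finset.sum_range_succ, Finset.sum_range_zero, Finset.prod_range_succ,
      Finset.prod_range_zero]
    norm_num [hHm1, hH0, ← Int.cast_smul_eq_zsmul ℚ, smul_smul, Nat.factorial]
    try norm_num [Algebra.smul_def, map_ofNat]
    try ring
  have e1_1 : (Hshift 1).coeff 1 = H.coeff 1 := by
    rw [hSc 1 1 (by norm_num) 3 (by norm_num)]
    simp only [Finset.sum_range_succ, Finset.sum_range_zero, Finset.prod_range_succ,
      Finset.prod_range_zero]
    norm_num [hHm1, hH0, ← Int.cast_smul_eq_zsmul ℚ, smul_smul, Nat.factorial]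
    try norm_num [Algebra.smul_def, map_ofNat]
    try ring
  have e1_2 : (Hshift 1).coeff 2 = H.coeff 1 + H.coeff 2 := by
    rw [hSc 1 2 (by norm_num) 4 (by norm_num)]
    simp only [Finset.sum_range_succ, Finset.sum_range_zero, Finset.prod_range_succ,
      Finset.prod_range_zero]
    norm_num [hHm1, hH0, ← Int.cast_smul_eq_zsmul ℚ, smul_smul, Nat.factorial]
    try norm_num [Algebra.smul_def, map_ofNat]
    try ring
  have e1_3 : (Hshift 1).coeff 3 = H.coeff 1 + 2 * H.coeff 2 + H.coeff 3 := by
    rw [hSc 1 3 (by norm_num) 5 (by norm_num)]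
    simp only [Finset.sum_range_succ, Finset.sum_range_zero, Finset.prod_range_succ,
      Finset.prod_range_zero]
    norm_num [hHm1, hH0, ← Int.cast_smul_eq_zsmul ℚ, smul_smul, Nat.factorial]
    try norm_num [Algebra.smul_def, map_ofNat]
    try ring
  have e1_4 : (Hshift 1).coeff 4 = H.coeff 1 + 3 * H.coeff 2 + 3 * H.coeff 3 + H.coeff 4 := by
    rw [hSc 1 4 (by norm_num) 6 (by norm_num)]
    simp only [Finset.sum_range_succ, Finset.sum_range_zero, Finset.prod_range_succ,
      Finset.prod_range_zero]
    norm_num [hHm1, hH0, ← Int.cast_smul_eq_zsmul ℚ, smul_smul, Nat.factorial]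
    try norm_num [Algebra.smul_def, map_ofNat]
    try ring
  have e2_m1 : (Hshift 2).coeff (-1 : ℤ) = (1 : A) := by
    rw [hSc 2 (-1 : ℤ) (by norm_num) 1 (by norm_num)]
    simp only [Finset.sum_range_succ, Finset.sum_range_zero, Finset.prod_range_succ,
      Finset.prod_range_zero]
    norm_num [hHm1, hH0, ← Int.cast_smul_eq_zsmul ℚ, smul_smul, Nat.factorial]
    try norm_num [Algebra.smul_def, map_ofNat]
    try ring
  have e2_0 : (Hshift 2).coeff 0 = (-2 : A) := by
    rw [hSc 2 0 (by norm_num) 2 (by norm_num)]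
    simp only [Finset.sum_range_succ, Finset.sum_range_zero, Finset.prod_range_succ,
      Finset.prod_range_zero]
    norm_num [hHm1, hH0, ← Int.cast_smul_eq_zsmul ℚ, smul_smul, Nat.factorial]
    try norm_num [Algebra.smul_def, map_ofNat]
    try ring
  have e2_1 : (Hshift 2).coeff 1 = H.coeff 1 := by
    rw [hSc 2 1 (by norm_num) 3 (by norm_num)]
    simp only [Finset.sum_range_succ, Finset.sum_range_zero, Finset.prod_range_succ,
      Finset.prod_range_zero]
    norm_num [hHm1, hH0, ← Int.cast_smul_eq_zsmul ℚ, smul_smul, Nat.factorial]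
    try norm_num [Algebra.smul_def, map_ofNat]
    try ring
  have e2_2 : (Hshift 2).coeff 2 = 2 * H.coeff 1 + H.coeff 2 := by
    rw [hSc 2 2 (by norm_num) 4 (by norm_num)]
    simp only [Finset.sum_range_succ, Finset.sum_range_zero, Finset.prod_range_succ,
      Finset.prod_range_zero]
    norm_num [hHm1, hH0, ← Int.cast_smul_eq_zsmul ℚ, smul_smul, Nat.factorial]
    try norm_num [Algebra.smul_def, map_ofNat]
    try ring
  have e2_3 : (Hshift 2).coeff 3 = 4 * H.coeff 1 + 4 * H.coeff 2 + H.coeff 3 := by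
    rw [hSc 2 3 (by norm_num) 5 (by norm_num)]
    simp only [Finset.sum_range_succ, Finset.sum_range_zero, Finset.prod_range_succ,
      Finset.prod_range_zero]
    norm_num [hHm1, hH0, ← Int.cast_smul_eq_zsmul ℚ, smul_smul, Nat.factorial]
    try norm_num [Algebra.smul_def, map_ofNat]
    try ring
  have e2_4 : (Hshift 2).coeff 4 = 8 * H.coeff 1 + 12 * H.coeff 2 + 6 * H.coeff 3 + H.coeff 4 := by
    rw [hSc 2 4 (by norm_num) 6 (by norm_num)]
    simp only [Finset.sum_range_succ, Finset.sum_range_zero, Finset.prod_range_succ,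
      Finset.prod_range_zero]
    norm_num [hHm1, hH0, ← Int.cast_smul_eq_zsmul ℚ, smul_smul, Nat.factorial]
    try norm_num [Algebra.smul_def, map_ofNat]
    try ring
  have e3_m1 : (Hshift 3).coeff (-1 : ℤ) = (1 : A) := by
    rw [hSc 3 (-1 : ℤ) (by norm_num) 1 (by norm_num)]
    simp only [Finset.sum_range_succ, Finset.sum_range_zero, Finset.prod_range_succ,
      Finset.prod_range_zero]
    norm_num [hHm1, hH0, ← Int.cast_smul_eq_zsmul ℚ, smul_smul, Nat.factorial]
    try norm_num [Algebra.smul_def, map_ofNat]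
    try ring
  have e3_0 : (Hshift 3).coeff 0 = (-3 : A) := by
    rw [hSc 3 0 (by norm_num) 2 (by norm_num)]
    simp only [Finset.sum_range_succ, Finset.sum_range_zero, Finset.prod_range_succ,
      Finset.prod_range_zero]
    norm_num [hHm1, hH0, ← Int.cast_smul_eq_zsmul ℚ, smul_smul, Nat.factorial]
    try norm_num [Algebra.smul_def, map_ofNat]
    try ring
  have e3_1 : (Hshift 3).coeff 1 = H.coeff 1 := by
    rw [hSc 3 1 (by norm_num) 3 (by norm_num)]
    simp only [Finset.sum_range_succ, Finset.sum_range_zero, Finset.prod_range_succ,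
      Finset.prod_range_zero]
    norm_num [hHm1, hH0, ← Int.cast_smul_eq_zsmul ℚ, smul_smul, Nat.factorial]
    try norm_num [Algebra.smul_def, map_ofNat]
    try ring
  have e3_2 : (Hshift 3).coeff 2 = 3 * H.coeff 1 + H.coeff 2 := by
    rw [hSc 3 2 (by norm_num) 4 (by norm_num)]
    simp only [Finset.sum_range_succ, Finset.sum_range_zero, Finset.prod_range_succ,
      Finset.prod_range_zero]
    norm_num [hHm1, hH0, ← Int.cast_smul_eq_zsmul ℚ, smul_smul, Nat.factorial]
    try norm_num [Algebra.smul_def, map_ofNat]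
    try ring
  have e3_3 : (Hshift 3).coeff 3 = 9 * H.coeff 1 + 6 * H.coeff 2 + H.coeff 3 := by
    rw [hSc 3 3 (by norm_num) 5 (by norm_num)]
    simp only [Finset.sum_range_succ, Finset.sum_range_zero, Finset.prod_range_succ,
      Finset.prod_range_zero]
    norm_num [hHm1, hH0, ← Int.cast_smul_eq_zsmul ℚ, smul_smul, Nat.factorial]
    try norm_num [Algebra.smul_def, map_ofNat]
    try ring
  have e3_4 : (Hshift 3).coeff 4 = 27 * H.coeff 1 + 27 * H.coeff 2 + 9 * H.coeff 3 + H.coeff 4 := by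
    rw [hSc 3 4 (by norm_num) 6 (by norm_num)]
    simp only [Finset.sum_range_succ, Finset.sum_range_zero, Finset.prod_range_succ,
      Finset.prod_range_zero]
    norm_num [hHm1, hH0, ← Int.cast_smul_eq_zsmul ℚ, smul_smul, Nat.factorial]
    try norm_num [Algebra.smul_def, map_ofNat]
    try ring
  have p01_m2 : (Hshift 0 * Hshift 1).coeff (-2 : ℤ) = (1 : A) := by
    rw [mul_coeff_eq (hSge 0) (hSge 1) (-2 : ℤ) 1 (by norm_num)]
    simp only [Finset.sum_range_succ, Finset.sum_range_zero]
    norm_num [e0_m1, e0_0, e0_1, e0_2, e0_3, e0_4,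
      e1_m1, e1_0, e1_1, e1_2, e1_3, e1_4]
    try ring
  have p01_m1 : (Hshift 0 * Hshift 1).coeff (-1 : ℤ) = (-1 : A) := by
    rw [mul_coeff_eq (hSge 0) (hSge 1) (-1 : ℤ) 2 (by norm_num)]
    simp only [Finset.sum_range_succ, Finset.sum_range_zero]
    norm_num [e0_m1, e0_0, e0_1, e0_2, e0_3, e0_4,
      e1_m1, e1_0, e1_1, e1_2, e1_3, e1_4]
    try ring
  have p01_0 : (Hshift 0 * Hshift 1).coeff 0 = 2 * H.coeff 1 := by
    rw [mul_coeff_eq (hSge 0) (hSge 1) 0 3 (by norm_num)]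
    simp only [Finset.sum_range_succ, Finset.sum_range_zero]
    norm_num [e0_m1, e0_0, e0_1, e0_2, e0_3, e0_4,
      e1_m1, e1_0, e1_1, e1_2, e1_3, e1_4]
    try ring
  have p01_1 : (Hshift 0 * Hshift 1).coeff 1 = 2 * H.coeff 2 := by
    rw [mul_coeff_eq (hSge 0) (hSge 1) 1 4 (by norm_num)]
    simp only [Finset.sum_range_succ, Finset.sum_range_zero]
    norm_num [e0_m1, e0_0, e0_1, e0_2, e0_3, e0_4,
      e1_m1, e1_0, e1_1, e1_2, e1_3, e1_4]
    try ring
  have p01_2 : (Hshift 0 * Hshift 1).coeff 2 = H.coeff 1 * H.coeff 1 + H.coeff 1 + H.coeff 2 + 2 * H.coeff 3 := by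
    rw [mul_coeff_eq (hSge 0) (hSge 1) 2 5 (by norm_num)]
    simp only [Finset.sum_range_succ, Finset.sum_range_zero]
    norm_num [e0_m1, e0_0, e0_1, e0_2, e0_3, e0_4,
      e1_m1, e1_0, e1_1, e1_2, e1_3, e1_4]
    try ring
  have p01_3 : (Hshift 0 * Hshift 1).coeff 3 = H.coeff 1 * H.coeff 1 + 2 * H.coeff 1 * H.coeff 2 + H.coeff 1 + 3 * H.coeff 2 + 2 * H.coeff 3 + 2 * H.coeff 4 := by
    rw [mul_coeff_eq (hSge 0) (hSge 1) 3 6 (by norm_num)]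
    simp only [Finset.sum_range_succ, Finset.sum_range_zero]
    norm_num [e0_m1, e0_0, e0_1, e0_2, e0_3, e0_4,
      e1_m1, e1_0, e1_1, e1_2, e1_3, e1_4]
    try ring
  have p23_m2 : (Hshift 2 * Hshift 3).coeff (-2 : ℤ) = (1 : A) := by
    rw [mul_coeff_eq (hSge 2) (hSge 3) (-2 : ℤ) 1 (by norm_num)]
    simp only [Finset.sum_range_succ, Finset.sum_range_zero]
    norm_num [e2_m1, e2_0, e2_1, e2_2, e2_3, e2_4,
      e3_m1, e3_0, e3_1, e3_2, e3_3, e3_4]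
    try ring
  have p23_m1 : (Hshift 2 * Hshift 3).coeff (-1 : ℤ) = (-5 : A) := by
    rw [mul_coeff_eq (hSge 2) (hSge 3) (-1 : ℤ) 2 (by norm_num)]
    simp only [Finset.sum_range_succ, Finset.sum_range_zero]
    norm_num [e2_m1, e2_0, e2_1, e2_2, e2_3, e2_4,
      e3_m1, e3_0, e3_1, e3_2, e3_3, e3_4]
    try ring
  have p23_0 : (Hshift 2 * Hshift 3).coeff 0 = 2 * H.coeff 1 + 6 := by
    rw [mul_coeff_eq (hSge 2) (hSge 3) 0 3 (by norm_num)]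
    simp only [Finset.sum_range_succ, Finset.sum_range_zero]
    norm_num [e2_m1, e2_0, e2_1, e2_2, e2_3, e2_4,
      e3_m1, e3_0, e3_1, e3_2, e3_3, e3_4]
    try ring
  have p23_1 : (Hshift 2 * Hshift 3).coeff 1 = 2 * H.coeff 2 := by
    rw [mul_coeff_eq (hSge 2) (hSge 3) 1 4 (by norm_num)]
    simp only [Finset.sum_range_succ, Finset.sum_range_zero]
    norm_num [e2_m1, e2_0, e2_1, e2_2, e2_3, e2_4,
      e3_m1, e3_0, e3_1, e3_2, e3_3, e3_4]
    try ring
  have p23_2 : (Hshift 2 * Hshift 3).coeff 2 = H.coeff 1 * H.coeff 1 + H.coeff 1 + 5 * H.coeff 2 + 2 * H.coeff 3 := by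
    rw [mul_coeff_eq (hSge 2) (hSge 3) 2 5 (by norm_num)]
    simp only [Finset.sum_range_succ, Finset.sum_range_zero]
    norm_num [e2_m1, e2_0, e2_1, e2_2, e2_3, e2_4,
      e3_m1, e3_0, e3_1, e3_2, e3_3, e3_4]
    try ring
  have p23_3 : (Hshift 2 * Hshift 3).coeff 3 = 5 * H.coeff 1 * H.coeff 1 + 2 * H.coeff 1 * H.coeff 2 + 5 * H.coeff 1 + 15 * H.coeff 2 + 10 * H.coeff 3 + 2 * H.coeff 4 := by
    rw [mul_coeff_eq (hSge 2) (hSge 3) 3 6 (by norm_num)]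
    simp only [Finset.sum_range_succ, Finset.sum_range_zero]
    norm_num [e2_m1, e2_0, e2_1, e2_2, e2_3, e2_4,
      e3_m1, e3_0, e3_1, e3_2, e3_3, e3_4]
    try ring
  have hprod : (∏ j ∈ Finset.range 4, Hshift j) =
      (Hshift 0 * Hshift 1) * (Hshift 2 * Hshift 3) := by
    rw [Finset.prod_range_succ, Finset.prod_range_succ, Finset.prod_range_succ,
      Finset.prod_range_one]
    try ring
  have hX : (∏ j ∈ Finset.range 4, Hshift j).coeff 1 =
      12 * H.coeff 1 * H.coeff 2 + 20 * H.coeff 2 + 4 * H.coeff 4 := by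
    rw [hprod, mul_coeff_eq ((hSge 0).mul (hSge 1)) ((hSge 2).mul (hSge 3)) 1 6 (by norm_num)]
    simp only [Finset.sum_range_succ, Finset.sum_range_zero]
    norm_num [p01_m2, p01_m1, p01_0, p01_1, p01_2, p01_3,
      p23_m2, p23_m1, p23_0, p23_1, p23_2, p23_3]
    try ring
  rw [hX]
  have h4A : (12 * H.coeff 1 * H.coeff 2 + 20 * H.coeff 2 + 4 * H.coeff 4 : A) =
      (-4 : ℚ) • (R 5 + 5 * R 3) := by
    rw [hq1, hq2, hq4, Algebra.smul_def]
    norm_num [map_ofNat]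
    try ring
  rw [h4A, smul_smul]
  norm_num
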